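/- The set S = {x ∈ ℤ² : 2x₁ + 3x₂ ≢ ±1 and 2x₁ + 3x₂ ≢ ±5 (mod 13)} satisfies N_S(x) ≤ 5 for every x ∈ S and has density exactly 9/13. -/

import Mathlib

open Filter Topology

/-- `y` is a neighbor of `x` in the 8-point (Moore) neighborhood of `ℤ²`. -/
def IsNbr (x y : ℤ × ℤ) : Prop :=
  y ≠ x ∧ |y.1 - x.1| ≤ 1 ∧ |y.2 - x.2| ≤ 1

/-- `N_S(x)`: the number of neighbors of `x` lying in `S`. -/
noncomputable def nbrCount (S : Set (ℤ × ℤ)) (x : ℤ × ℤ) : ℕ :=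
  Set.ncard {y ∈ S | IsNbr x y}

/-- The box `B_r = {x : |x₁| < r, |x₂| < r}`. -/
def box (r : ℕ) : Set (ℤ × ℤ) :=
  {x | |x.1| < (r : ℤ) ∧ |x.2| < (r : ℤ)}

/-- `S` has density `d`: the sequence `|S ∩ B_r| / (2r-1)²` tends to `d`. -/
def HasDensity (S : Set (ℤ × ℤ)) (d : ℝ) : Prop :=
  Tendsto (fun r : ℕ => (Set.ncard (S ∩ box r) : ℝ) / (2 * (r : ℝ) - 1) ^ 2) atTop (𝓝 d)

/-- The set of `x ∈ ℤ²` with `2x₁ + 3x₂ ≢ ±1, ±5 (mod 13)`. -/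
def cubicResidueSet : Set (ℤ × ℤ) :=
  {x | ¬ 2 * x.1 + 3 * x.2 ≡ 1 [ZMOD 13] ∧ ¬ 2 * x.1 + 3 * x.2 ≡ -1 [ZMOD 13] ∧
       ¬ 2 * x.1 + 3 * x.2 ≡ 5 [ZMOD 13] ∧ ¬ 2 * x.1 + 3 * x.2 ≡ -5 [ZMOD 13]}

/-! ### Auxiliary material -/

/-- The forbidden residues mod 13. -/
def badRes (c : ZMod 13) : Prop := c = 1 ∨ c = -1 ∨ c = 5 ∨ c = -5

instance : DecidablePred badRes := fun c => by unfold badRes; infer_instance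

lemma modeq_iff (a m : ℤ) : a ≡ m [ZMOD 13] ↔ ((a : ZMod 13) = (m : ZMod 13)) :=
  (ZMod.intCast_eq_intCast_iff a m 13).symm

lemma mem_crs_iff (x : ℤ × ℤ) :
    x ∈ cubicResidueSet ↔ ¬ badRes ((2 * x.1 + 3 * x.2 : ℤ) : ZMod 13) := by
  simp only [cubicResidueSet, Set.mem_setOf_eq, modeq_iff, badRes]
  push_cast
  tauto

/-- The eight Moore-neighborhood offsets. -/
def offs : Finset (ℤ × ℤ) := {(-1,-1),(0,-1),(1,-1),(-1,0),(1,0),(-1,1),(0,1),(1,1)}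

set_option maxRecDepth 4000 in
lemma key5 : ∀ c : ZMod 13, ¬ badRes c →
    (offs.filter (fun d => ¬ badRes (c + ((2 * d.1 + 3 * d.2 : ℤ) : ZMod 13)))).card ≤ 5 := by
  decide

lemma nineRes : ((Finset.univ.filter (fun c : ZMod 13 => ¬ badRes c))).card = 9 := by decide

lemma part1 : ∀ x ∈ cubicResidueSet, nbrCount cubicResidueSet x ≤ 5 := by
  classical
  intro x hx
  set c : ZMod 13 := ((2 * x.1 + 3 * x.2 : ℤ) : ZMod 13) with hc
  have hset : {y ∈ cubicResidueSet | IsNbr x y} =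
      ↑((offs.filter (fun d => ¬ badRes (c + ((2 * d.1 + 3 * d.2 : ℤ) : ZMod 13)))).image
        (fun d => (x.1 + d.1, x.2 + d.2))) := by
    ext y
    simp only [Set.mem_setOf_eq, Finset.coe_image, Set.mem_image, Finset.mem_coe,
      Finset.mem_filter]
    constructor
    · rintro ⟨hyS, hne, h1, h2⟩
      refine ⟨(y.1 - x.1, y.2 - x.2), ⟨?_, ?_⟩, ?_⟩
      · have h1' := abs_le.mp h1
        have h2' := abs_le.mp h2
        have hne' : ¬ (y.1 - x.1 = 0 ∧ y.2 - x.2 = 0) := by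
          rintro ⟨e1, e2⟩
          exact hne (Prod.ext (by omega) (by omega))
        simp only [offs, Finset.mem_insert, Finset.mem_singleton, Prod.ext_iff]
        omega
      · show ¬ badRes (c + ((2 * (y.1 - x.1) + 3 * (y.2 - x.2) : ℤ) : ZMod 13))
        have key : c + ((2 * (y.1 - x.1) + 3 * (y.2 - x.2) : ℤ) : ZMod 13)
            = ((2 * y.1 + 3 * y.2 : ℤ) : ZMod 13) := by
          rw [hc]; push_cast; ring
        rw [key]
        exact (mem_crs_iff y).mp hyS
      · exact Prod.ext (by simp) (by simp)
    · rintro ⟨d, ⟨hdo, hdS⟩, rfl⟩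
      have hkey : c + ((2 * d.1 + 3 * d.2 : ℤ) : ZMod 13)
          = ((2 * (x.1 + d.1) + 3 * (x.2 + d.2) : ℤ) : ZMod 13) := by
        rw [hc]; push_cast; ring
      rw [hkey] at hdS
      have hd : (d.1 = -1 ∨ d.1 = 0 ∨ d.1 = 1) ∧ (d.2 = -1 ∨ d.2 = 0 ∨ d.2 = 1)
          ∧ ¬ (d.1 = 0 ∧ d.2 = 0) := by
        simp only [offs, Finset.mem_insert, Finset.mem_singleton, Prod.ext_iff] at hdo
        omega
      refine ⟨(mem_crs_iff _).mpr hdS, ?_, ?_, ?_⟩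
      · intro h
        rw [Prod.ext_iff] at h
        simp only at h
        omega
      · show |x.1 + d.1 - x.1| ≤ 1
        rw [abs_le]; omega
      · show |x.2 + d.2 - x.2| ≤ 1
        rw [abs_le]; omega
  have hcount : nbrCount cubicResidueSet x =
      ((offs.filter (fun d => ¬ badRes (c + ((2 * d.1 + 3 * d.2 : ℤ) : ZMod 13)))).image
        (fun d => (x.1 + d.1, x.2 + d.2))).card := by
    rw [nbrCount, hset, Set.ncard_coe_finset]
  rw [hcount]
  calc ((offs.filter _).image _).card
      ≤ (offs.filter (fun d => ¬ badRes (c + ((2 * d.1 + 3 * d.2 : ℤ) : ZMod 13)))).card :=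
        Finset.card_image_le
    _ ≤ 5 := key5 c ((mem_crs_iff x).mp hx)

/-! ### Counting lemmas for the density -/

lemma rowEq (k b : ℤ) :
    ((Finset.Ico k (k + 13)).filter (fun a => ¬ badRes ((2 * a + 3 * b : ℤ) : ZMod 13))).card
      = 9 := by
  classical
  rw [← nineRes]
  apply Finset.card_nbij (fun a => ((2 * a + 3 * b : ℤ) : ZMod 13))
  · intro a ha
    simp only [Finset.mem_coe, Finset.mem_filter] at ha ⊢
    exact ⟨Finset.mem_univ _, ha.2⟩
  · intro a ha a' ha' h
    simp only [Finset.coe_filter, Set.mem_setOf_eq, Finset.mem_Ico] at ha ha'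
    have hmod := (ZMod.intCast_eq_intCast_iff _ _ _).mp h
    have hdvd : (13 : ℤ) ∣ 2 * a' + 3 * b - (2 * a + 3 * b) := hmod.dvd
    omega
  · intro t ht
    simp only [Finset.coe_filter, Set.mem_setOf_eq, Finset.mem_univ, true_and] at ht
    set v : ℕ := (7 * (t - ((2 * k + 3 * b : ℤ) : ZMod 13))).val with hv
    have hvlt : v < 13 := ZMod.val_lt _
    have h13 : (13 : ZMod 13) = 0 := by decide
    have hcast2 : ((v : ℕ) : ZMod 13) = 7 * (t - (2 * (k : ZMod 13) + 3 * (b : ZMod 13))) := by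
      rw [hv, ZMod.natCast_val, ZMod.cast_id]
      push_cast
      ring
    have hval : ((2 * (k + (v : ℤ)) + 3 * b : ℤ) : ZMod 13) = t := by
      push_cast
      linear_combination 2 * hcast2 + (t - 2 * (k : ZMod 13) - 3 * (b : ZMod 13)) * h13
    refine ⟨k + v, ?_, hval⟩
    simp only [Finset.coe_filter, Set.mem_setOf_eq, Finset.mem_Ico]
    refine ⟨⟨by omega, by omega⟩, ?_⟩
    rw [hval]; exact ht

lemma rowBound (b : ℤ) : ∀ (L : ℕ) (k : ℤ),
    9 * (L / 13) ≤
      ((Finset.Ico k (k + L)).filter (fun a => ¬ badRes ((2 * a + 3 * b : ℤ) : ZMod 13))).card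
    ∧ ((Finset.Ico k (k + L)).filter
        (fun a => ¬ badRes ((2 * a + 3 * b : ℤ) : ZMod 13))).card ≤ 9 * (L / 13) + 12 := by
  intro L
  induction L using Nat.strong_induction_on with
  | _ L ih =>
    intro k
    by_cases hL : L < 13
    · have hq : L / 13 = 0 := by omega
      have hcard : ((Finset.Ico k (k + L)).filter
          (fun a => ¬ badRes ((2 * a + 3 * b : ℤ) : ZMod 13))).card ≤ L := by
        calc _ ≤ (Finset.Ico k (k + (L:ℤ))).card := Finset.card_filter_le _ _
          _ = L := by rw [Int.card_Ico]; omega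
      constructor
      · simp [hq]
      · omega
    · push_neg at hL
      have hsplit : Finset.Ico k (k + (L : ℤ)) =
          Finset.Ico k (k + 13) ∪ Finset.Ico (k + 13) (k + L) := by
        rw [Finset.Ico_union_Ico_eq_Ico (by omega) (by omega)]
      have hdisj : Disjoint
          ((Finset.Ico k (k + 13)).filter (fun a => ¬ badRes ((2 * a + 3 * b : ℤ) : ZMod 13)))
          ((Finset.Ico (k + 13) (k + L)).filter
            (fun a => ¬ badRes ((2 * a + 3 * b : ℤ) : ZMod 13))) :=
        Finset.disjoint_filter_filter (Finset.Ico_disjoint_Ico_consecutive k (k+13) (k + L))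
      have htail : Finset.Ico (k + 13) (k + (L:ℤ)) =
          Finset.Ico (k + 13) ((k + 13) + ((L - 13 : ℕ) : ℤ)) := by
        congr 1; omega
      have hih := ih (L - 13) (by omega) (k + 13)
      rw [hsplit, Finset.filter_union, Finset.card_union_of_disjoint hdisj, rowEq, htail]
      omega

lemma totalBound (r : ℕ) (hr : 1 ≤ r) :
    (2*r-1) * (9 * ((2*r-1) / 13)) ≤ (cubicResidueSet ∩ box r).ncard ∧
    (cubicResidueSet ∩ box r).ncard ≤ (2*r-1) * (9 * ((2*r-1) / 13) + 12) := by
  classical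
  set L : ℕ := 2*r - 1 with hL
  set I : Finset ℤ := Finset.Ico (1 - (r:ℤ)) (r:ℤ) with hI
  set F : Finset (ℤ × ℤ) :=
    (I ×ˢ I).filter (fun x => ¬ badRes ((2*x.1+3*x.2 : ℤ) : ZMod 13)) with hF
  have hIcard : I.card = L := by rw [hI, Int.card_Ico]; omega
  have hbox : cubicResidueSet ∩ box r = ↑F := by
    ext y
    simp only [hF, Set.mem_inter_iff, mem_crs_iff, box, Set.mem_setOf_eq, Finset.coe_filter,
      Finset.mem_product, hI, Finset.mem_Ico]
    rw [abs_lt, abs_lt]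
    constructor
    · rintro ⟨h, ⟨a1, a2⟩, b1, b2⟩
      exact ⟨⟨⟨by omega, by omega⟩, by omega, by omega⟩, h⟩
    · rintro ⟨⟨⟨a1, a2⟩, b1, b2⟩, h⟩
      exact ⟨h, ⟨by omega, by omega⟩, by omega, by omega⟩
  have hncard : (cubicResidueSet ∩ box r).ncard = F.card := by
    rw [hbox, Set.ncard_coe_finset]
  have hfiber : F.card =
      ∑ bb ∈ I, (I.filter (fun a => ¬ badRes ((2*a+3*bb : ℤ) : ZMod 13))).card := by
    rw [Finset.card_eq_sum_card_fiberwise (f := Prod.snd) (t := I)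
      (fun x hx => by simp only [hF, Finset.mem_coe, Finset.mem_filter, Finset.mem_product] at hx
                      exact hx.1.2)]
    apply Finset.sum_congr rfl
    intro bb hbb
    apply Finset.card_nbij' (fun x => x.1) (fun a => (a, bb))
    · intro x hx
      simp only [hF, Finset.mem_coe, Finset.mem_filter, Finset.mem_product] at hx
      obtain ⟨⟨⟨hx1, hx2⟩, hxp⟩, hxs⟩ := hx
      simp only [Finset.mem_coe, Finset.mem_filter]
      refine ⟨hx1, ?_⟩
      rwa [hxs] at hxp
    · intro a ha
      simp only [Finset.mem_coe, Finset.mem_filter] at ha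
      simp only [hF, Finset.mem_coe, Finset.mem_filter, Finset.mem_product]
      exact ⟨⟨⟨ha.1, hbb⟩, ha.2⟩, trivial⟩
    · intro x hx
      simp only [Finset.mem_coe, Finset.mem_filter] at hx
      exact Prod.ext rfl hx.2.symm
    · intro a _
      rfl
  have hrowI : ∀ bb : ℤ, I = Finset.Ico (1 - (r:ℤ)) ((1 - (r:ℤ)) + L) := by
    intro bb
    rw [hI]
    congr 1
    omega
  have hlow : L * (9 * (L / 13)) ≤ F.card := by
    rw [hfiber]
    calc L * (9 * (L / 13)) = I.card • (9 * (L / 13)) := by rw [hIcard]; simp [smul_eq_mul]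
      _ ≤ ∑ bb ∈ I, (I.filter (fun a => ¬ badRes ((2*a+3*bb : ℤ) : ZMod 13))).card := by
          apply Finset.card_nsmul_le_sum
          intro bb _
          rw [hrowI bb]
          exact (rowBound bb L (1 - (r:ℤ))).1
  have hhigh : F.card ≤ L * (9 * (L / 13) + 12) := by
    rw [hfiber]
    calc ∑ bb ∈ I, (I.filter (fun a => ¬ badRes ((2*a+3*bb : ℤ) : ZMod 13))).card
        ≤ I.card • (9 * (L / 13) + 12) := by
          apply Finset.sum_le_card_nsmul
          intro bb _
          rw [hrowI bb]
          exact (rowBound bb L (1 - (r:ℤ))).2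
      _ = L * (9 * (L / 13) + 12) := by rw [hIcard]; simp [smul_eq_mul]
  rw [hncard]
  exact ⟨hlow, hhigh⟩

lemma part2 : HasDensity cubicResidueSet (9 / 13) := by
  have hx2r : Tendsto (fun r : ℕ => 2 * (r:ℝ) - 1) atTop atTop := by
    have h1 : Tendsto (fun r : ℕ => 2 * (r:ℝ)) atTop atTop :=
      (tendsto_natCast_atTop_atTop).const_mul_atTop two_pos
    simpa [sub_eq_add_neg] using tendsto_atTop_add_const_right atTop (-1 : ℝ) h1
  have h0 : Tendsto (fun r : ℕ => (12:ℝ) / (2 * (r:ℝ) - 1)) atTop (𝓝 0) :=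
    Tendsto.div_atTop tendsto_const_nhds hx2r
  have hlo : Tendsto (fun r : ℕ => 9/13 - (12:ℝ) / (2 * (r:ℝ) - 1)) atTop (𝓝 (9/13)) := by
    simpa using tendsto_const_nhds.sub h0
  have hhi : Tendsto (fun r : ℕ => 9/13 + (12:ℝ) / (2 * (r:ℝ) - 1)) atTop (𝓝 (9/13)) := by
    simpa using tendsto_const_nhds.add h0
  apply tendsto_of_tendsto_of_tendsto_of_le_of_le' hlo hhi
  · filter_upwards [eventually_ge_atTop 1] with r hr
    obtain ⟨H1, H2⟩ := totalBound r hr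
    set L : ℕ := 2*r - 1 with hLdef
    set q : ℕ := L / 13 with hqdef
    have hr' : (1:ℝ) ≤ (r:ℝ) := by exact_mod_cast hr
    have hxpos : (0:ℝ) < 2 * (r:ℝ) - 1 := by linarith
    have hLx : (L:ℝ) = 2 * (r:ℝ) - 1 := by
      rw [hLdef]
      have h1 : (1:ℕ) ≤ 2*r := by omega
      rw [Nat.cast_sub h1]
      push_cast; ring
    have hq2 : L ≤ 13*q + 12 := by omega
    have cast1 : (2*(r:ℝ)-1) * (9*(q:ℝ)) ≤ ((cubicResidueSet ∩ box r).ncard : ℝ) := by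
      rw [← hLx]
      exact_mod_cast H1
    have hq2' : (L:ℝ) ≤ 13*(q:ℝ) + 12 := by exact_mod_cast hq2
    rw [hLx] at hq2'
    have hx2 : (0:ℝ) < (2*(r:ℝ)-1)^2 := by positivity
    rw [le_div_iff₀ hx2]
    have expand : (9/13 - 12/(2*(r:ℝ)-1)) * (2*(r:ℝ)-1)^2
        = 9/13*(2*(r:ℝ)-1)^2 - 12*(2*(r:ℝ)-1) := by
      field_simp
    rw [expand]
    nlinarith [mul_le_mul_of_nonneg_left hq2' (show (0:ℝ) ≤ 9/13*(2*(r:ℝ)-1) by positivity)]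
  · filter_upwards [eventually_ge_atTop 1] with r hr
    obtain ⟨H1, H2⟩ := totalBound r hr
    set L : ℕ := 2*r - 1 with hLdef
    set q : ℕ := L / 13 with hqdef
    have hr' : (1:ℝ) ≤ (r:ℝ) := by exact_mod_cast hr
    have hxpos : (0:ℝ) < 2 * (r:ℝ) - 1 := by linarith
    have hLx : (L:ℝ) = 2 * (r:ℝ) - 1 := by
      rw [hLdef]
      have h1 : (1:ℕ) ≤ 2*r := by omega
      rw [Nat.cast_sub h1]
      push_cast; ring
    have hq1 : 13*q ≤ L := by omega
    have cast2 : ((cubicResidueSet ∩ box r).ncard : ℝ) ≤ (2*(r:ℝ)-1) * (9*(q:ℝ) + 12) := by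
      rw [← hLx]
      exact_mod_cast H2
    have hq1' : 13*(q:ℝ) ≤ (L:ℝ) := by exact_mod_cast hq1
    rw [hLx] at hq1'
    have hx2 : (0:ℝ) < (2*(r:ℝ)-1)^2 := by positivity
    rw [div_le_iff₀ hx2]
    have expand : (9/13 + 12/(2*(r:ℝ)-1)) * (2*(r:ℝ)-1)^2
        = 9/13*(2*(r:ℝ)-1)^2 + 12*(2*(r:ℝ)-1) := by
      field_simp
    rw [expand]
    nlinarith [mul_le_mul_of_nonneg_left hq1' (show (0:ℝ) ≤ 9/13*(2*(r:ℝ)-1) by positivity)]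

theorem cubicResidueSet_degree_five_density :
    (∀ x ∈ cubicResidueSet, nbrCount cubicResidueSet x ≤ 5) ∧
    HasDensity cubicResidueSet (9 / 13) := by
  exact ⟨part1, part2⟩
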